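/- If a ring R is right serial (R as a right module over itself is a finite direct sum of uniserial modules), then R is strongly right finite dimensional and SG.dim R_R = G.dim R_R. -/
import Mathlib


/-- Goldie (uniform) dimension: supremum of the number of independent nonzero submodules. -/
noncomputable def goldieDim (R M : Type*) [Ring R] [AddCommGroup M] [Module R M] : ℕ∞ :=
  ⨆ (n : ℕ) (_ : ∃ f : Fin n → Submodule R M, (∀ i, f i ≠ ⊥) ∧ iSupIndep f), (n : ℕ∞)

/-- Strong Goldie dimension: supremum of Goldie dimensions of all quotients. -/
noncomputable def sgoldieDim (R M : Type*) [Ring R] [AddCommGroup M] [Module R M] : ℕ∞ :=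
  ⨆ K : Submodule R M, goldieDim R (M ⧸ K)

/-- A module is uniserial if its submodules are linearly ordered by inclusion. -/
def IsUniserialModule (R M : Type*) [Ring R] [AddCommGroup M] [Module R M] : Prop :=
  ∀ A B : Submodule R M, A ≤ B ∨ B ≤ A

/-- A (nonzero) module is uniform if any two nonzero submodules intersect nontrivially,
i.e. every nonzero submodule is essential. -/
def IsUniformModule (R M : Type*) [Ring R] [AddCommGroup M] [Module R M] : Prop :=
  Nontrivial M ∧ ∀ A B : Submodule R M, A ≠ ⊥ → B ≠ ⊥ → A ⊓ B ≠ ⊥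

section Aux

variable {S : Type*} [Ring S] {M : Type*} [AddCommGroup M] [Module S M]

/-- Key counting lemma: if `⨆ V i` over `Fin n` contains every member of an independent
family of nonzero submodules, and each `V i` has linearly ordered submodules (ambiently),
then the family has at most `n` members. -/
lemma keyCount : ∀ (n : ℕ) (V : Fin n → Submodule S M),
    (∀ i, ∀ W₁ W₂ : Submodule S M, W₁ ≤ V i → W₂ ≤ V i → W₁ ≤ W₂ ∨ W₂ ≤ W₁) →
    ∀ (ι : Type) (_ : Fintype ι) (f : ι → Submodule S M),
      (∀ j, f j ≠ ⊥) → iSupIndep f → (∀ j, f j ≤ ⨆ i, V i) →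
      Fintype.card ι ≤ n := by
  intro n
  induction n with
  | zero =>
    intro V huni ι _ f hne hind hle
    by_contra h
    push_neg at h
    obtain ⟨j⟩ := Fintype.card_pos_iff.mp h
    have : f j ≤ ⊥ := (hle j).trans (by simp)
    exact hne j (le_bot_iff.mp this)
  | succ n IH =>
    intro V huni ι _ f hne hind hle
    classical
    set N : Submodule S M := ⨆ i : Fin n, V i.castSucc with hN
    set U : Submodule S M := V (Fin.last n) with hU
    have hQ : (⨆ i, V i) = N ⊔ U := by
      apply le_antisymm
      · refine iSup_le fun i => ?_
        induction i using Fin.lastCases with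
        | last => exact le_sup_right
        | cast i => exact le_sup_of_le_left (le_iSup (fun i : Fin n => V i.castSucc) i)
      · exact sup_le (iSup_le fun i => le_iSup V i.castSucc) (le_iSup V (Fin.last n))
    by_cases hcase : ∀ j, f j ⊓ N ≠ ⊥
    · have := IH (fun i => V i.castSucc) (fun i => huni i.castSucc) ι ‹Fintype ι›
        (fun j => f j ⊓ N) hcase (hind.mono fun j => inf_le_left) (fun j => inf_le_right)
      omega
    · push_neg at hcase
      obtain ⟨j₀, hAN⟩ := hcase
      set A : Submodule S M := f j₀ with hA
      have hAQ : A ≤ N ⊔ U := hQ ▸ hle j₀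
      -- `N ⊔ A` is essential in `N ⊔ U`
      have hess : ∀ X : Submodule S M, X ≤ N ⊔ U → X ≠ ⊥ → X ⊓ (N ⊔ A) ≠ ⊥ := by
        intro X hXQ hX hF
        have hXN : X ⊓ N = ⊥ := by
          rw [← le_bot_iff, ← hF]
          exact inf_le_inf_left X le_sup_left
        have hXA : X ⊓ (A ⊔ N) = ⊥ := by rw [sup_comm]; exact hF
        have hAX : A ⊓ (X ⊔ N) = ⊥ := by
          rw [Submodule.eq_bot_iff]
          intro a ha
          obtain ⟨haA, haXN⟩ := Submodule.mem_inf.mp ha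
          obtain ⟨x, hx, nn, hnn, hxn⟩ := Submodule.mem_sup.mp haXN
          have hxX : x ∈ X ⊓ (A ⊔ N) := by
            refine Submodule.mem_inf.mpr ⟨hx, ?_⟩
            have hxe : x = a - nn := by
              have : x + nn = a := hxn
              linear_combination (norm := abel) this
            rw [hxe]
            exact sub_mem (Submodule.mem_sup_left haA) (Submodule.mem_sup_right hnn)
          rw [hXA] at hxX
          have hx0 : x = 0 := (Submodule.mem_bot S).mp hxX
          have : a ∈ A ⊓ N := Submodule.mem_inf.mpr ⟨haA, by
            rw [← hxn, hx0, zero_add]; exact hnn⟩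
          rw [hAN] at this
          exact (Submodule.mem_bot S).mp this
        have hmodA : A ⊔ N = N ⊔ (U ⊓ (A ⊔ N)) := by
          have h1 : (N ⊔ U) ⊓ (A ⊔ N) = N ⊔ (U ⊓ (A ⊔ N)) :=
            sup_inf_assoc_of_le U le_sup_right
          rw [← h1, inf_eq_right.mpr (sup_le hAQ le_sup_left)]
        have hmodX : X ⊔ N = N ⊔ (U ⊓ (X ⊔ N)) := by
          have h1 : (N ⊔ U) ⊓ (X ⊔ N) = N ⊔ (U ⊓ (X ⊔ N)) :=
            sup_inf_assoc_of_le U le_sup_right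
          rw [← h1, inf_eq_right.mpr (sup_le hXQ le_sup_left)]
        rcases huni (Fin.last n) (U ⊓ (A ⊔ N)) (U ⊓ (X ⊔ N)) inf_le_left inf_le_left with hc | hc
        · -- A ⊔ N ≤ X ⊔ N, derive contradiction from A ≠ ⊥
          have hle2 : A ⊔ N ≤ X ⊔ N := by
            rw [hmodA, hmodX]; exact sup_le_sup_left hc N
          obtain ⟨a, haA, ha0⟩ := (Submodule.ne_bot_iff A).mp (hne j₀)
          have haXN : a ∈ X ⊔ N := hle2 (Submodule.mem_sup_left haA)
          obtain ⟨x, hx, nn, hnn, hxn⟩ := Submodule.mem_sup.mp haXN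
          have hxX : x ∈ X ⊓ (A ⊔ N) := by
            refine Submodule.mem_inf.mpr ⟨hx, ?_⟩
            have hxe : x = a - nn := by linear_combination (norm := abel) hxn
            rw [hxe]
            exact sub_mem (Submodule.mem_sup_left haA) (Submodule.mem_sup_right hnn)
          rw [hXA] at hxX
          have hx0 : x = 0 := (Submodule.mem_bot S).mp hxX
          have haAN : a ∈ A ⊓ N := Submodule.mem_inf.mpr ⟨haA, by
            rw [← hxn, hx0, zero_add]; exact hnn⟩
          rw [hAN] at haAN
          exact ha0 ((Submodule.mem_bot S).mp haAN)
        · -- X ⊔ N ≤ A ⊔ N, derive contradiction from X ≠ ⊥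
          have hle2 : X ⊔ N ≤ A ⊔ N := by
            rw [hmodA, hmodX]; exact sup_le_sup_left hc N
          obtain ⟨x, hxX, hx0⟩ := (Submodule.ne_bot_iff X).mp hX
          have hxAN : x ∈ A ⊔ N := hle2 (Submodule.mem_sup_left hxX)
          obtain ⟨a, ha, nn, hnn, han⟩ := Submodule.mem_sup.mp hxAN
          have haA : a ∈ A ⊓ (X ⊔ N) := by
            refine Submodule.mem_inf.mpr ⟨ha, ?_⟩
            have hae : a = x - nn := by linear_combination (norm := abel) han
            rw [hae]
            exact sub_mem (Submodule.mem_sup_left hxX) (Submodule.mem_sup_right hnn)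
          rw [hAX] at haA
          have ha0 : a = 0 := (Submodule.mem_bot S).mp haA
          have hxXN : x ∈ X ⊓ N := Submodule.mem_inf.mpr ⟨hxX, by
            rw [← han, ha0, zero_add]; exact hnn⟩
          rw [hXN] at hxXN
          exact hx0 ((Submodule.mem_bot S).mp hxXN)
      -- build the new family indexed by `{l // l ≠ j₀}`
      set g : {l : ι // l ≠ j₀} → Submodule S M :=
        fun l => N ⊓ ((f l ⊓ (N ⊔ A)) ⊔ A) with hg
      have hgle : ∀ l, g l ≤ ⨆ i : Fin n, V i.castSucc := fun l => inf_le_left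
      have hgne : ∀ l, g l ≠ ⊥ := by
        intro l hbot
        have hFne : f l ⊓ (N ⊔ A) ≠ ⊥ := hess (f l) (hQ ▸ hle l) (hne l)
        obtain ⟨v, hvF, hv0⟩ := (Submodule.ne_bot_iff _).mp hFne
        have hvNA : (v : M) ∈ N ⊔ A := (Submodule.mem_inf.mp hvF).2
        obtain ⟨nn, hnn, a, ha, hna⟩ := Submodule.mem_sup.mp hvNA
        have hnng : nn ∈ g l := by
          refine Submodule.mem_inf.mpr ⟨hnn, ?_⟩
          have hne2 : nn = v - a := by linear_combination (norm := abel) hna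
          rw [hne2]
          exact sub_mem (Submodule.mem_sup_left hvF) (Submodule.mem_sup_right ha)
        rw [hbot] at hnng
        have hnn0 : nn = 0 := (Submodule.mem_bot S).mp hnng
        have hvA : v ∈ f l ⊓ f j₀ := by
          refine Submodule.mem_inf.mpr ⟨(Submodule.mem_inf.mp hvF).1, ?_⟩
          rw [← hna, hnn0, zero_add]; exact ha
        have hdisj : f (l : ι) ⊓ f j₀ = ⊥ :=
          disjoint_iff.mp (hind.pairwiseDisjoint l.2)
        rw [hdisj] at hvA
        exact hv0 ((Submodule.mem_bot S).mp hvA)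
      have hgind : iSupIndep g := by
        intro l
        rw [disjoint_iff, Submodule.eq_bot_iff]
        intro x hx
        obtain ⟨hxg, hxsup⟩ := Submodule.mem_inf.mp hx
        set W : Submodule S M := ⨆ (l' : ι) (_ : l' ≠ (l : ι)), f l' with hWdef
        have hsub : (⨆ (l' : {l' : ι // l' ≠ j₀}) (_ : l' ≠ l), g l') ≤ W ⊔ A := by
          refine iSup₂_le fun l' hl' => ?_
          have h1 : g l' ≤ f l' ⊔ A :=
            le_trans inf_le_right (sup_le_sup_right inf_le_left A)
          have h2 : f (l' : ι) ≤ W := by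
            have hne3 : (l' : ι) ≠ (l : ι) := fun h => hl' (Subtype.ext h)
            exact le_iSup₂ (f := fun (l'' : ι) (_ : l'' ≠ (l : ι)) => f l'') (l' : ι) hne3
          exact h1.trans (sup_le_sup_right h2 A)
        have hxWA : x ∈ W ⊔ A := hsub hxsup
        obtain ⟨hxN, hxFA⟩ := Submodule.mem_inf.mp hxg
        obtain ⟨v, hvF, a, haA, hva⟩ := Submodule.mem_sup.mp hxFA
        obtain ⟨w, hwW, a', ha'A, hwa⟩ := Submodule.mem_sup.mp hxWA
        have hj₀W : f j₀ ≤ W := by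
          have hne4 : j₀ ≠ (l : ι) := fun h => l.2 h.symm
          exact le_iSup₂ (f := fun (l'' : ι) (_ : l'' ≠ (l : ι)) => f l'') j₀ hne4
        have hvW : v ∈ f (l : ι) ⊓ W := by
          refine Submodule.mem_inf.mpr ⟨(Submodule.mem_inf.mp hvF).1, ?_⟩
          have hve : v = w + (a' - a) := by linear_combination (norm := abel) hva - hwa
          rw [hve]
          exact add_mem hwW (W.sub_mem (hj₀W ha'A) (hj₀W haA))
        have hdisj : f (l : ι) ⊓ W = ⊥ := disjoint_iff.mp (hind (l : ι))
        rw [hdisj] at hvW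
        have hv0 : v = 0 := (Submodule.mem_bot S).mp hvW
        have hxAN : x ∈ A ⊓ N := Submodule.mem_inf.mpr ⟨by
          rw [← hva, hv0, zero_add]; exact haA, hxN⟩
        rw [hAN] at hxAN
        exact (Submodule.mem_bot S).mp hxAN
      have hcard := IH (fun i => V i.castSucc) (fun i => huni i.castSucc)
        {l : ι // l ≠ j₀} inferInstance g hgne hgind hgle
      have h1 : Fintype.card {l : ι // l ≠ j₀} = Fintype.card ι - 1 := by
        simp [Fintype.card_subtype_compl]
      have h2 : 1 ≤ Fintype.card ι := Fintype.card_pos_iff.mpr ⟨j₀⟩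
      omega

/-- Transfer uniseriality of a submodule to ambient comparability. -/
lemma uniserial_ambient {P : Submodule S M} (h : IsUniserialModule S ↥P) :
    ∀ W₁ W₂ : Submodule S M, W₁ ≤ P → W₂ ≤ P → W₁ ≤ W₂ ∨ W₂ ≤ W₁ := by
  intro W₁ W₂ h1 h2
  have e1 : Submodule.map P.subtype (Submodule.comap P.subtype W₁) = W₁ := by
    rw [Submodule.map_comap_subtype, inf_eq_right.mpr h1]
  have e2 : Submodule.map P.subtype (Submodule.comap P.subtype W₂) = W₂ := by
    rw [Submodule.map_comap_subtype, inf_eq_right.mpr h2]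
  rcases h (W₁.comap P.subtype) (W₂.comap P.subtype) with hh | hh
  · left; rw [← e1, ← e2]; exact Submodule.map_mono hh
  · right; rw [← e1, ← e2]; exact Submodule.map_mono hh

/-- Ambient comparability is preserved by images of linear maps. -/
lemma uniserial_map {M₂ : Type*} [AddCommGroup M₂] [Module S M₂] (π : M →ₗ[S] M₂)
    {P : Submodule S M}
    (h : ∀ W₁ W₂ : Submodule S M, W₁ ≤ P → W₂ ≤ P → W₁ ≤ W₂ ∨ W₂ ≤ W₁) :
    ∀ W₁ W₂ : Submodule S M₂, W₁ ≤ P.map π → W₂ ≤ P.map π → W₁ ≤ W₂ ∨ W₂ ≤ W₁ := by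
  have key : ∀ W : Submodule S M₂, W ≤ P.map π →
      Submodule.map π (Submodule.comap π W ⊓ P) = W := by
    intro W hW
    apply le_antisymm
    · exact le_trans (Submodule.map_mono inf_le_left) (Submodule.map_comap_le π W)
    · intro x hx
      obtain ⟨u, hu, hux⟩ := Submodule.mem_map.mp (hW hx)
      exact Submodule.mem_map.mpr ⟨u, Submodule.mem_inf.mpr
        ⟨Submodule.mem_comap.mpr (by rw [hux]; exact hx), hu⟩, hux⟩
  intro W₁ W₂ h1 h2
  rcases h (Submodule.comap π W₁ ⊓ P) (Submodule.comap π W₂ ⊓ P) inf_le_right inf_le_right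
    with hh | hh
  · left; rw [← key W₁ h1, ← key W₂ h2]; exact Submodule.map_mono hh
  · right; rw [← key W₁ h1, ← key W₂ h2]; exact Submodule.map_mono hh

lemma goldieDim_le_of_serial (m : ℕ) (V : Fin m → Submodule S M) (hsup : ⨆ i, V i = ⊤)
    (huni : ∀ i, ∀ W₁ W₂ : Submodule S M, W₁ ≤ V i → W₂ ≤ V i → W₁ ≤ W₂ ∨ W₂ ≤ W₁) :
    goldieDim S M ≤ (m : ℕ∞) := by
  unfold goldieDim
  refine iSup₂_le fun k hk => ?_
  obtain ⟨f, hne, hind⟩ := hk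
  have := keyCount m V huni (Fin k) inferInstance f hne hind
    (fun j => by rw [hsup]; exact le_top)
  exact_mod_cast (by simpa using this : k ≤ m)

lemma le_goldieDim_of_indep {ι : Type} [Fintype ι] (f : ι → Submodule S M)
    (hne : ∀ j, f j ≠ ⊥) (hind : iSupIndep f) :
    (Fintype.card ι : ℕ∞) ≤ goldieDim S M := by
  unfold goldieDim
  set e := (Fintype.equivFin ι).symm
  exact le_iSup₂ (f := fun (n : ℕ) (_ : ∃ f : Fin n → Submodule S M,
      (∀ i, f i ≠ ⊥) ∧ iSupIndep f) => (n : ℕ∞)) (Fintype.card ι)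
    ⟨fun j => f (e j), fun j => hne _, hind.comp e.injective⟩

end Aux

/-- If R is right serial then R is strongly right finite dimensional and
SG.dim R_R = G.dim R_R.  (Right R-modules are modules over Rᵐᵒᵖ.) -/
theorem sgoldieDim_eq_goldieDim_of_rightSerial {R : Type*} [Ring R]
    (hserial : ∃ (n : ℕ) (U : Fin n → Submodule Rᵐᵒᵖ R),
      DirectSum.IsInternal U ∧ ∀ i, IsUniserialModule Rᵐᵒᵖ ↥(U i)) :
    sgoldieDim Rᵐᵒᵖ R < ⊤ ∧ sgoldieDim Rᵐᵒᵖ R = goldieDim Rᵐᵒᵖ R := by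
  classical
  obtain ⟨n, U, hint, huniU⟩ := hserial
  have hUindep : iSupIndep U := hint.submodule_iSupIndep
  have hUtop : ⨆ i, U i = ⊤ := hint.submodule_iSup_eq_top
  have huniA : ∀ i, ∀ W₁ W₂ : Submodule Rᵐᵒᵖ R,
      W₁ ≤ U i → W₂ ≤ U i → W₁ ≤ W₂ ∨ W₂ ≤ W₁ :=
    fun i => uniserial_ambient (huniU i)
  set m := Fintype.card {i : Fin n // U i ≠ ⊥} with hm
  set e : Fin m ≃ {i : Fin n // U i ≠ ⊥} := (Fintype.equivFin {i : Fin n // U i ≠ ⊥}).symm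
    with he
  set U' : Fin m → Submodule Rᵐᵒᵖ R := fun j => U (e j) with hU'
  have hU'ne : ∀ j, U' j ≠ ⊥ := fun j => (e j).2
  have hU'ind : iSupIndep U' := hUindep.comp (Subtype.val_injective.comp e.injective)
  have hU'top : ⨆ j, U' j = ⊤ := by
    rw [← hUtop]
    apply le_antisymm (iSup_le fun j => le_iSup U _)
    refine iSup_le fun i => ?_
    by_cases h : U i = ⊥
    · rw [h]; exact bot_le
    · refine le_iSup_of_le (e.symm ⟨i, h⟩) (le_of_eq ?_)
      rw [e.apply_symm_apply]
  have huniA' : ∀ j, ∀ W₁ W₂ : Submodule Rᵐᵒᵖ R,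
      W₁ ≤ U' j → W₂ ≤ U' j → W₁ ≤ W₂ ∨ W₂ ≤ W₁ := fun j => huniA (e j)
  -- every quotient has Goldie dimension at most m
  have hquot : ∀ K : Submodule Rᵐᵒᵖ R, goldieDim Rᵐᵒᵖ (R ⧸ K) ≤ (m : ℕ∞) := by
    intro K
    refine goldieDim_le_of_serial m (fun j => (U' j).map K.mkQ) ?_ ?_
    · rw [← Submodule.map_iSup, hU'top, Submodule.map_top, Submodule.range_mkQ]
    · exact fun j => uniserial_map K.mkQ (huniA' j)
  have hRle : goldieDim Rᵐᵒᵖ R ≤ (m : ℕ∞) := goldieDim_le_of_serial m U' hU'top huniA'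
  have hRge : (m : ℕ∞) ≤ goldieDim Rᵐᵒᵖ R := by
    have := le_goldieDim_of_indep U' hU'ne hU'ind
    simpa using this
  have hR : goldieDim Rᵐᵒᵖ R = (m : ℕ∞) := le_antisymm hRle hRge
  -- the quotient by ⊥ has Goldie dimension at least m
  have hbot : (m : ℕ∞) ≤ goldieDim Rᵐᵒᵖ (R ⧸ (⊥ : Submodule Rᵐᵒᵖ R)) := by
    set eqv := (Submodule.quotEquivOfEqBot (⊥ : Submodule Rᵐᵒᵖ R) rfl).symm with heqv
    set oe := Submodule.orderIsoMapComap eqv with hoe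
    have hne2 : ∀ j, oe (U' j) ≠ ⊥ := by
      intro j h
      exact hU'ne j (oe.injective (h.trans oe.map_bot.symm))
    have := le_goldieDim_of_indep (fun j => oe (U' j)) hne2 (hU'ind.map_orderIso oe)
    simpa using this
  have hsgle : sgoldieDim Rᵐᵒᵖ R ≤ (m : ℕ∞) := by
    unfold sgoldieDim
    exact iSup_le fun K => hquot K
  have hsgge : (m : ℕ∞) ≤ sgoldieDim Rᵐᵒᵖ R := by
    refine hbot.trans ?_
    unfold sgoldieDim
    exact le_iSup (fun K : Submodule Rᵐᵒᵖ R => goldieDim Rᵐᵒᵖ (R ⧸ K))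
      (⊥ : Submodule Rᵐᵒᵖ R)
  have hsg : sgoldieDim Rᵐᵒᵖ R = (m : ℕ∞) := le_antisymm hsgle hsgge
  refine ⟨?_, ?_⟩
  · rw [hsg]; exact WithTop.coe_lt_top m
  · rw [hsg, hR]
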